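/- Let K be a field and let E_0, …, E_{a-1} be finite-dimensional K-vector spaces (indexed by Z/aZ), with linear maps u_i : E_i → E_{i+1} for each i in Z/aZ. Let E = E_0 ⊕ ⋯ ⊕ E_{a-1} and let u : E → E be the linear map whose restriction to E_i is u_i (landing in E_{i+1}). Then det(1 − (u_{a-1} ∘ ⋯ ∘ u_1 ∘ u_0)·T^a) = det(1 − u·T) as polynomials in K[T]. -/

import Mathlib

/-- The reverse characteristic polynomial `det(1 - f·T)` of an endomorphism `f`
of a finite-dimensional vector space, computed via any (here: the canonical) basis. -/
noncomputable def revCharPoly {K V : Type*} [Field K] [AddCommGroup V] [Module K V]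
    [FiniteDimensional K V] (f : V →ₗ[K] V) : Polynomial K :=
  Matrix.det (1 - (Polynomial.X : Polynomial K) •
    ((LinearMap.toMatrix (Module.finBasis K V) (Module.finBasis K V) f).map Polynomial.C))

open Polynomial Matrix LinearMap

theorem CyclicRevCharPoly.matrix_key {K : Type*} [Field K] (a : ℕ) [NeZero a] (n : Fin a → ℕ)
    (M : Matrix (Σ i : Fin a, Fin (n i)) (Σ i : Fin a, Fin (n i)) K)
    (hMsupp : ∀ j k : (Σ i : Fin a, Fin (n i)), j.1 ≠ k.1 + 1 → M j k = 0) :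
    Matrix.det (1 - (X : K[X]) • M.map C)
      = Matrix.det (1 - (X : K[X]) ^ a •
          (Matrix.of (fun j k : Fin (n 0) => (M ^ a) ⟨0, j⟩ ⟨0, k⟩)).map C) := by
  classical
  have ha : 0 < a := Nat.pos_of_ne_zero (NeZero.ne a)
  set N : Matrix (Σ i : Fin a, Fin (n i)) (Σ i : Fin a, Fin (n i)) K := Matrix.of (fun j k =>
    if (j.1 : ℕ) = (k.1 : ℕ) + 1 then M j k else 0) with hN
  set R : Matrix (Σ i : Fin a, Fin (n i)) (Σ i : Fin a, Fin (n i)) K := Matrix.of (fun j k =>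
    if (j.1 : ℕ) = 0 ∧ (k.1 : ℕ) = a - 1 then M j k else 0) with hR
  have hadd : ∀ i : Fin a, ((i + 1 : Fin a) : ℕ) = if (i : ℕ) = a - 1 then 0 else (i : ℕ) + 1 := by
    intro i
    rcases eq_or_ne a 1 with h1 | h1
    · subst h1
      have h0 : (i : ℕ) = 0 := by have := i.isLt; omega
      rw [h0, if_pos rfl]
      have := (i + 1).isLt
      omega
    · have hi := i.isLt
      have h2 : 2 ≤ a := by omega
      rw [Fin.val_add, Fin.val_one', Nat.mod_eq_of_lt h2]
      by_cases h : (i : ℕ) = a - 1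
      · rw [if_pos h, h, Nat.sub_add_cancel (by omega), Nat.mod_self]
      · rw [if_neg h, Nat.mod_eq_of_lt (by omega)]
  have hMNR : M = N + R := by
    ext j k
    show M j k = N j k + R j k
    by_cases h : j.1 = k.1 + 1
    · by_cases h2 : (k.1 : ℕ) = a - 1
      · have hj0 : (j.1 : ℕ) = 0 := by
          rw [h, hadd, if_pos h2]
        have hN0 : (j.1 : ℕ) ≠ (k.1 : ℕ) + 1 := by
          have := k.1.isLt; omega
        simp [hN, hR, hN0, hj0, h2, Fin.val_eq_zero_iff.mp hj0]
      · have hj : (j.1 : ℕ) = (k.1 : ℕ) + 1 := by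
          rw [h, hadd, if_neg h2]
        have hne : ¬((j.1 : ℕ) = 0 ∧ (k.1 : ℕ) = a - 1) := by
          rintro ⟨h1, -⟩; omega
        simp [hN, hR, hj, hne, h2]
    · have hM0 := hMsupp j k h
      have hN0 : (j.1 : ℕ) ≠ (k.1 : ℕ) + 1 := by
        intro hc
        exact h (Fin.ext (by rw [hadd]; have := k.1.isLt; rw [if_neg (by omega)]; exact hc))
      have hR0 : ¬((j.1 : ℕ) = 0 ∧ (k.1 : ℕ) = a - 1) := by
        rintro ⟨h1, h2⟩
        exact h (Fin.ext (by rw [hadd, if_pos h2, h1]))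
      simp [hN, hR, hN0, hR0, hM0]
  have hNsupp : ∀ (m : ℕ) (j k : (Σ i : Fin a, Fin (n i))),
      (j.1 : ℕ) ≠ (k.1 : ℕ) + m → (N ^ m) j k = 0 := by
    intro m
    induction m with
    | zero =>
      intro j k h
      rw [pow_zero]
      exact Matrix.one_apply_ne (fun hc => h (by rw [hc]; ring))
    | succ m ih =>
      intro j k h
      rw [pow_succ, Matrix.mul_apply]
      apply Finset.sum_eq_zero
      intro x _
      by_cases hx : (x.1 : ℕ) = (k.1 : ℕ) + 1
      · rw [ih j x (by omega), zero_mul]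
      · have hz : N x k = 0 := by simp [hN, hx]
        rw [hz, mul_zero]
  have hNa : N ^ a = 0 := by
    ext j k
    exact hNsupp a j k (by have := j.1.isLt; omega)
  -- polynomial matrices
  set An : Matrix _ _ K[X] := (X : K[X]) • N.map C with hAn
  set Ar : Matrix _ _ K[X] := (X : K[X]) • R.map C with hAr
  have hsplit : (X : K[X]) • M.map C = An + Ar := by
    rw [hMNR, Matrix.map_add _ (map_add C), smul_add]
  have hAnm : ∀ m : ℕ, An ^ m = (X : K[X]) ^ m • (N ^ m).map C := by
    intro m
    induction m with
    | zero => rw [pow_zero, pow_zero, pow_zero, one_smul, Matrix.map_one _ (map_zero C) (map_one C)]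
    | succ m ih =>
      rw [pow_succ, ih, hAn, Matrix.smul_mul, Matrix.mul_smul, smul_smul, ← Matrix.map_mul,
        ← pow_succ, ← pow_succ]
  have hAna : An ^ a = 0 := by rw [hAnm, hNa]; simp
  set S : Matrix _ _ K[X] := ∑ m ∈ Finset.range a, An ^ m with hS
  have h1S : (1 - An) * S = 1 := by
    have h := mul_geom_sum An a
    rw [hAna] at h
    calc (1 - An) * S = -((An - 1) * S) := by rw [← neg_sub An 1, neg_mul]
    _ = -(0 - 1) := by rw [hS, h]
    _ = 1 := by simp
  have hS1 : S * (1 - An) = 1 := by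
    have h := geom_sum_mul An a
    rw [hAna] at h
    calc S * (1 - An) = -(S * (An - 1)) := by rw [← neg_sub An 1, mul_neg]
    _ = -(0 - 1) := by rw [hS, h]
    _ = 1 := by simp
  have hdet1An : (1 - An).det = 1 := by
    have hunit : IsUnit (1 - An).det :=
      (Matrix.isUnit_iff_isUnit_det _).mp ⟨⟨1 - An, S, h1S, hS1⟩, rfl⟩
    obtain ⟨r, hr, hrC⟩ := Polynomial.isUnit_iff.mp hunit
    have hev : (Polynomial.evalRingHom (0 : K)) (1 - An).det = 1 := by
      rw [RingHom.map_det]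
      have : (Polynomial.evalRingHom (0 : K)).mapMatrix (1 - An) = 1 := by
        rw [map_sub, _root_.map_one]
        have : (Polynomial.evalRingHom (0 : K)).mapMatrix An = 0 := by
          ext j k
          simp [hAn, Matrix.map_apply]
        rw [this, sub_zero]
      rw [this, Matrix.det_one]
    rw [← hrC] at hev ⊢
    simp only [coe_evalRingHom, eval_C] at hev
    rw [hev, Polynomial.C_1]
  -- main determinant manipulation
  have key1 : (1 : Matrix _ _ K[X]) - (X : K[X]) • M.map C = (1 - An) * (1 - S * Ar) := by
    rw [hsplit, mul_sub, mul_one, ← Matrix.mul_assoc, h1S, Matrix.one_mul, sub_sub]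
  rw [key1, Matrix.det_mul, hdet1An, one_mul, Matrix.det_one_sub_mul_comm]
  set Q : Matrix _ _ K[X] := Ar * S with hQ
  have hQrow : ∀ j k, (j.1 : ℕ) ≠ 0 → Q j k = 0 := by
    intro j k hj
    rw [hQ, Matrix.mul_apply]
    apply Finset.sum_eq_zero
    intro x _
    have : Ar j x = 0 := by
      simp only [hAr, Matrix.smul_apply, Matrix.map_apply, hR]
      rw [Matrix.of_apply, if_neg (by tauto)]
      simp
    rw [this, zero_mul]
  -- block extraction
  set Q00 : Matrix (Fin (n 0)) (Fin (n 0)) K[X] :=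
    Matrix.of (fun j k => Q ⟨0, j⟩ ⟨0, k⟩) with hQ00
  have hblock : (1 - Q).det = (1 - Q00).det := by
    have hf : Function.Bijective (Sum.elim (fun j : Fin (n 0) => (⟨0, j⟩ : Σ i : Fin a, Fin (n i)))
        (fun x : {x : Σ i : Fin a, Fin (n i) // x.1 ≠ 0} => x.1)) := by
      constructor
      · rintro (j | x) (k | y) h
        · simp only [Sum.elim_inl] at h
          obtain ⟨-, h2⟩ := Sigma.mk.inj_iff.mp h
          rw [eq_of_heq h2]
        · exact absurd (congrArg Sigma.fst h).symm y.2
        · exact absurd (congrArg Sigma.fst h) x.2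
        · exact congrArg Sum.inr (Subtype.ext h)
      · rintro ⟨i, y⟩
        by_cases h : i = 0
        · subst h; exact ⟨Sum.inl y, rfl⟩
        · exact ⟨Sum.inr ⟨⟨i, y⟩, h⟩, rfl⟩
    set e := Equiv.ofBijective _ hf with he
    rw [← Matrix.det_submatrix_equiv_self e (1 - Q)]
    have hsub : (1 - Q).submatrix e e = Matrix.fromBlocks (1 - Q00)
        (Matrix.of fun (j : Fin (n 0)) (x : {x : Σ i : Fin a, Fin (n i) // x.1 ≠ 0}) =>
          -(Q ⟨0, j⟩ x.1)) 0 1 := by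
      apply Matrix.ext
      rintro (j | x) (k | y)
      · show (1 - Q) ⟨0, j⟩ ⟨0, k⟩ = (1 - Q00) j k
        simp only [Matrix.sub_apply, Matrix.one_apply, hQ00, Matrix.of_apply]
        congr 1
        by_cases h : j = k
        · subst h; rw [if_pos rfl, if_pos rfl]
        · rw [if_neg h, if_neg (by rintro hc; exact h (eq_of_heq (Sigma.mk.inj_iff.mp hc).2))]
      · show (1 - Q) ⟨0, j⟩ y.1 = -(Q ⟨0, j⟩ y.1)
        have : (1 : Matrix (Σ i : Fin a, Fin (n i)) (Σ i : Fin a, Fin (n i)) K[X]) ⟨0, j⟩ y.1 = 0 :=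
          Matrix.one_apply_ne (fun hc => y.2 (congrArg Sigma.fst hc).symm)
        rw [Matrix.sub_apply, this, zero_sub]
      · show (1 - Q) x.1 ⟨0, k⟩ = 0
        have h1 : (1 : Matrix (Σ i : Fin a, Fin (n i)) (Σ i : Fin a, Fin (n i)) K[X]) x.1 ⟨0, k⟩ = 0 :=
          Matrix.one_apply_ne (fun hc => x.2 (congrArg Sigma.fst hc))
        have h2 : Q x.1 ⟨0, k⟩ = 0 := by
          apply hQrow
          intro hc
          exact x.2 (Fin.ext hc)
        rw [Matrix.sub_apply, h1, h2, sub_zero]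
      · show (1 - Q) x.1 y.1 = (1 : Matrix _ _ K[X]) x y
        have h2 : Q x.1 y.1 = 0 := by
          apply hQrow
          intro hc
          exact x.2 (Fin.ext hc)
        rw [Matrix.sub_apply, h2, sub_zero, Matrix.one_apply, Matrix.one_apply]
        congr 1
        rw [eq_iff_iff]
        exact ⟨fun h => Subtype.ext h, fun h => congrArg Subtype.val h⟩
    rw [hsub, Matrix.det_fromBlocks_zero₂₁, Matrix.det_one, mul_one]
  rw [hblock]
  -- identify Q00
  have hQ00eq : Q00 = (X : K[X]) ^ a •
      (Matrix.of (fun j k : Fin (n 0) => (M ^ a) ⟨0, j⟩ ⟨0, k⟩)).map C := by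
    have hArAn : ∀ m : ℕ, Ar * An ^ m = (X : K[X]) ^ (m + 1) • (R * N ^ m).map C := by
      intro m
      rw [hAnm, hAr, Matrix.smul_mul, Matrix.mul_smul, smul_smul, ← Matrix.map_mul,
        ← pow_succ']
    have hclaim : ∀ m, m < a → ∀ (x : Σ i : Fin a, Fin (n i)) (k : Fin (n 0)),
        (M ^ m) x ⟨0, k⟩ = if (x.1 : ℕ) = m then (N ^ m) x ⟨0, k⟩ else 0 := by
      intro m
      induction m with
      | zero =>
        intro _ x k
        rw [pow_zero]
        by_cases h : (x.1 : ℕ) = 0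
        · rw [if_pos h, pow_zero]
        · rw [if_neg h]
          exact Matrix.one_apply_ne (fun hc => h (by rw [hc]; simp))
      | succ m ih =>
        intro hm x k
        rw [pow_succ', Matrix.mul_apply]
        by_cases hx : (x.1 : ℕ) = m + 1
        · rw [if_pos hx, pow_succ', Matrix.mul_apply]
          apply Finset.sum_congr rfl
          intro y _
          by_cases hy : (y.1 : ℕ) = m
          · have hMN : M x y = N x y := by
              rw [hN, Matrix.of_apply, if_pos (by omega)]
            rw [ih (by omega) y k, if_pos hy, hMN]
          · rw [ih (by omega) y k, if_neg hy, mul_zero,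
              hNsupp m y ⟨0, k⟩ (by simpa using hy), mul_zero]
        · rw [if_neg hx]
          apply Finset.sum_eq_zero
          intro y _
          by_cases hy : (y.1 : ℕ) = m
          · have : M x y = 0 := by
              apply hMsupp
              intro hc
              apply hx
              rw [hc, hadd, if_neg (by omega), hy]
            rw [this, zero_mul]
          · rw [ih (by omega) y k, if_neg hy, mul_zero]
    have hRN : ∀ (j k : Fin (n 0)),
        (R * N ^ (a - 1)) ⟨0, j⟩ ⟨0, k⟩ = (M ^ a) ⟨0, j⟩ ⟨0, k⟩ := by
      intro j k
      have hMa : M * M ^ (a - 1) = M ^ a := by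
        rw [← pow_succ']
        congr 1
        omega
      rw [Matrix.mul_apply, ← hMa, Matrix.mul_apply]
      apply Finset.sum_congr rfl
      intro y _
      rw [hclaim (a - 1) (by omega) y k]
      by_cases hy : (y.1 : ℕ) = a - 1
      · rw [if_pos hy]
        have : R ⟨0, j⟩ y = M ⟨0, j⟩ y := by
          rw [hR, Matrix.of_apply, if_pos (by simp [hy])]
        rw [this]
      · rw [if_neg hy, mul_zero]
        have : R ⟨0, j⟩ y = 0 := by
          rw [hR, Matrix.of_apply, if_neg (by tauto)]
        rw [this, zero_mul]
    apply Matrix.ext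
    intro j k
    rw [hQ00, Matrix.of_apply, hQ, hS, Finset.mul_sum]
    have hterm : ∀ m ∈ Finset.range a, (Ar * An ^ m) ⟨0, j⟩ ⟨0, k⟩
        = if m = a - 1 then (X : K[X]) ^ a * C ((M ^ a) ⟨0, j⟩ ⟨0, k⟩) else 0 := by
      intro m hm
      rw [Finset.mem_range] at hm
      rw [hArAn]
      by_cases h : m = a - 1
      · rw [if_pos h, h, Matrix.smul_apply, Matrix.map_apply, hRN,
          Nat.sub_add_cancel ha, smul_eq_mul]
      · rw [if_neg h, Matrix.smul_apply, Matrix.map_apply]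
        have : (R * N ^ m) ⟨0, j⟩ ⟨0, k⟩ = 0 := by
          rw [Matrix.mul_apply]
          apply Finset.sum_eq_zero
          intro y _
          by_cases hy : (y.1 : ℕ) = a - 1
          · rw [hNsupp m y ⟨0, k⟩ (by simp; omega), mul_zero]
          · have : R ⟨0, j⟩ y = 0 := by
              rw [hR, Matrix.of_apply, if_neg (by tauto)]
            rw [this, zero_mul]
        rw [this, map_zero, smul_zero]
    rw [Matrix.sum_apply]
    calc (∑ m ∈ Finset.range a, (Ar * An ^ m) ⟨0, j⟩ ⟨0, k⟩)
        = ∑ m ∈ Finset.range a,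
            if m = a - 1 then (X : K[X]) ^ a * C ((M ^ a) ⟨0, j⟩ ⟨0, k⟩) else 0 :=
          Finset.sum_congr rfl hterm
      _ = (X : K[X]) ^ a * C ((M ^ a) ⟨0, j⟩ ⟨0, k⟩) := by
          rw [Finset.sum_ite_eq' (Finset.range a)]
          rw [if_pos (Finset.mem_range.mpr (by omega))]
      _ = ((X : K[X]) ^ a • (Matrix.of (fun j k : Fin (n 0) =>
            (M ^ a) ⟨0, j⟩ ⟨0, k⟩)).map C) j k := by
          rw [Matrix.smul_apply, Matrix.map_apply, Matrix.of_apply, smul_eq_mul]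
  rw [hQ00eq]

/-- Basis independence of `revCharPoly`. -/
theorem CyclicRevCharPoly.revCharPoly_eq {K V : Type*} [Field K] [AddCommGroup V] [Module K V]
    [FiniteDimensional K V] {ι : Type*} [Fintype ι] [DecidableEq ι] (b : Module.Basis ι K V)
    (f : V →ₗ[K] V) :
    revCharPoly f = Matrix.det (1 - (Polynomial.X : Polynomial K) •
      ((LinearMap.toMatrix b b f).map Polynomial.C)) := by
  rw [revCharPoly]
  set c := Module.finBasis K V with hc
  have key : LinearMap.toMatrix b b f
      = b.toMatrix c * LinearMap.toMatrix c c f * c.toMatrix b :=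
    (basis_toMatrix_mul_linearMap_toMatrix_mul_basis_toMatrix (b := b) (b' := c) (c := b)
      (c' := c) (f := f)).symm
  have hBB : (c.toMatrix b * b.toMatrix c : Matrix _ _ K) = 1 :=
    Module.Basis.toMatrix_mul_toMatrix_flip c b
  rw [key]
  have h2 : (Polynomial.X : Polynomial K) • ((b.toMatrix c * LinearMap.toMatrix c c f
      * c.toMatrix b).map Polynomial.C)
      = ((b.toMatrix c).map Polynomial.C
        * ((Polynomial.X : Polynomial K) • (LinearMap.toMatrix c c f).map Polynomial.C))
        * (c.toMatrix b).map Polynomial.C := by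
    rw [Matrix.map_mul, Matrix.map_mul, Matrix.mul_smul, Matrix.smul_mul]
  rw [h2, Matrix.det_one_sub_mul_comm, ← Matrix.mul_assoc, ← Matrix.map_mul, hBB]
  simp [Matrix.smul_mul]

/-- Substituting `X ^ a` in the reverse characteristic polynomial. -/
theorem CyclicRevCharPoly.comp_pow {K : Type*} [Field K] (a : ℕ) {m : Type*} [Fintype m]
    [DecidableEq m] (P : Matrix m m K) :
    (Matrix.det (1 - (X : K[X]) • P.map C)).comp (X ^ a)
      = Matrix.det (1 - (X : K[X]) ^ a • P.map C) := by
  have h1 : (Matrix.det (1 - (X : K[X]) • P.map C)).comp (X ^ a)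
      = (Polynomial.eval₂RingHom (C : K →+* K[X]) ((X : K[X]) ^ a))
          (Matrix.det (1 - (X : K[X]) • P.map C)) := rfl
  rw [h1, RingHom.map_det]
  congr 1
  rw [map_sub, _root_.map_one]
  congr 1
  apply Matrix.ext
  intro j k
  simp [Matrix.map_apply, eval₂_mul, eval₂_C, eval₂_X]


theorem stmt0 {K V : Type*} [Field K] [AddCommGroup V] [Module K V] [FiniteDimensional K V]
    (a : ℕ) [NeZero a] (p : Fin a → Submodule K V) (hp : DirectSum.IsInternal p)
    (u : V →ₗ[K] V) (hu : ∀ (i : Fin a), ∀ x ∈ p i, u x ∈ p (i + 1))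
    (h0 : ∀ x ∈ p 0, (u ^ a) x ∈ p 0) :
    (revCharPoly ((u ^ a).restrict h0)).comp (Polynomial.X ^ a) = revCharPoly u := by
  classical
  set v : ∀ i : Fin a, Module.Basis (Fin (Module.finrank K (p i))) K (p i) :=
    fun i => Module.finBasis K (p i) with hv
  set cb := hp.collectedBasis v with hcb
  set M : Matrix (Σ i : Fin a, Fin (Module.finrank K (p i)))
      (Σ i : Fin a, Fin (Module.finrank K (p i))) K := LinearMap.toMatrix cb cb u with hM
  have hMsupp : ∀ j k : (Σ i : Fin a, Fin (Module.finrank K (p i))),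
      j.1 ≠ k.1 + 1 → M j k = 0 := by
    intro j k h
    rw [hM, LinearMap.toMatrix_apply]
    have hmem : u (cb k) ∈ p (k.1 + 1) := by
      apply hu
      rw [hcb]
      exact hp.collectedBasis_mem v k
    obtain ⟨j1, j2⟩ := j
    exact hp.collectedBasis_repr_of_mem_ne v (Ne.symm h) hmem
  -- the matrix of the restricted power
  have hP : ∀ j k : Fin (Module.finrank K (p 0)),
      LinearMap.toMatrix (Module.finBasis K (p 0)) (Module.finBasis K (p 0))
        ((u ^ a).restrict h0) j k = (M ^ a) ⟨0, j⟩ ⟨0, k⟩ := by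
    intro j k
    rw [hM, LinearMap.toMatrix_pow, LinearMap.toMatrix_apply, LinearMap.toMatrix_apply]
    have hmem : (u ^ a) (cb ⟨0, k⟩) ∈ p 0 := by
      apply h0
      rw [hcb]
      exact hp.collectedBasis_mem v ⟨0, k⟩
    rw [hp.collectedBasis_repr_of_mem v hmem]
    simp only [hv]
    have hxy : ((u ^ a).restrict h0) ((Module.finBasis K (p 0)) k)
        = (⟨(u ^ a) (cb ⟨0, k⟩), hmem⟩ : p 0) := by
      apply Subtype.ext
      rw [LinearMap.restrict_apply]
      show ((u ^ a) ((Module.finBasis K (p 0)) k : V)) = (u ^ a) (cb ⟨0, k⟩)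
      congr 1
      rw [hcb, hp.collectedBasis_coe]
    rw [hxy]
  have hPm : LinearMap.toMatrix (Module.finBasis K (p 0)) (Module.finBasis K (p 0))
      ((u ^ a).restrict h0)
      = Matrix.of (fun j k : Fin (Module.finrank K (p 0)) => (M ^ a) ⟨0, j⟩ ⟨0, k⟩) := by
    apply Matrix.ext
    intro j k
    rw [Matrix.of_apply, hP]
  rw [CyclicRevCharPoly.revCharPoly_eq cb u, revCharPoly, hPm, CyclicRevCharPoly.comp_pow,
    CyclicRevCharPoly.matrix_key a (fun i => Module.finrank K (p i)) M hMsupp]
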